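/- arXiv:2201.09940 — 3 statements merged into one kernel-verified Lean document; each statement's English description precedes it below -/
import Mathlib

section
/- Suppose there exist C, t > 0 such that for all d ∈ ℕ, C·e^{2t(1+ln d)} ≥ (1−e^{-2}) ∏_{j=1}^d (1+2ζ(α)γ_j), where α>1 and 1 ≥ γ_1 ≥ γ_2 ≥ ⋯ > 0. Then lim_{j→∞} γ_j = 0 and limsup_{d→∞} (1/ln(d+1)) Σ_{j=1}^d γ_j < ∞. -/
noncomputable def zetaR (α : ℝ) : ℝ := ∑' n : ℕ, 1 / ((n : ℝ) + 1) ^ α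

open Filter

/-- If `C e^{2t(1+ln d)} ≥ (1-e^{-2}) ∏_{j=1}^d (1+2ζ(α)γ_j)` for all `d ≥ 1`, then
`γ_j → 0` and `limsup_d (1/ln(d+1)) Σ_{j=1}^d γ_j < ∞`. -/
theorem stmt7 (α : ℝ) (hα : 1 < α) (γ : ℕ → ℝ) (hmono : Antitone γ)
    (hγ : ∀ j, γ j ∈ Set.Ioc (0 : ℝ) 1) (C t : ℝ) (hC : 0 < C) (ht : 0 < t)
    (h : ∀ d : ℕ, 1 ≤ d →
      (1 - Real.exp (-2)) * ∏ j ∈ Finset.range d, (1 + 2 * zetaR α * γ j) ≤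
        C * Real.exp (2 * t * (1 + Real.log d))) :
    Tendsto γ atTop (nhds 0) ∧
      ∃ B : ℝ, ∀ d : ℕ, (∑ j ∈ Finset.range d, γ j) ≤ B * Real.log ((d : ℝ) + 1) := by
  set ζ := zetaR α with hζdef
  -- ζ ≥ 1
  have hsum : Summable (fun n : ℕ => 1 / ((n : ℝ) + 1) ^ α) := by
    have h1 := (Real.summable_one_div_nat_rpow (p := α)).mpr hα
    have h2 := (summable_nat_add_iff 1).mpr h1
    refine h2.congr fun n => by push_cast; ring_nf
  have hζ1 : 1 ≤ ζ := by
    have h0 := Summable.le_tsum hsum 0 (fun j _ => by positivity)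
    rw [hζdef]
    unfold zetaR
    simpa using h0
  have hE : (0:ℝ) < 1 - Real.exp (-2) := by
    have : Real.exp (-2) < 1 := Real.exp_lt_one_iff.mpr (by norm_num)
    linarith
  set K := Real.log (1 + 2 * ζ) with hKdef
  have hK : 0 < K := Real.log_pos (by linarith)
  have hpos : ∀ j, (0:ℝ) < 1 + 2 * ζ * γ j := fun j => by
    have := (hγ j).1; nlinarith
  -- pointwise Bernoulli estimate
  have hpt : ∀ j, γ j * K ≤ Real.log (1 + 2 * ζ * γ j) := by
    intro j
    have hb := rpow_one_add_le_one_add_mul_self (s := 2 * ζ)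
      (by linarith) (hγ j).1.le (hγ j).2
    have hlog := Real.log_le_log (Real.rpow_pos_of_pos (by linarith) _) hb
    rw [Real.log_rpow (by linarith)] at hlog
    calc γ j * K = γ j * Real.log (1 + 2 * ζ) := rfl
      _ ≤ Real.log (1 + γ j * (2 * ζ)) := hlog
      _ = Real.log (1 + 2 * ζ * γ j) := by ring_nf
  set A := Real.log C - Real.log (1 - Real.exp (-2)) + 2 * t with hAdef
  -- key sum bound for d ≥ 1
  have key : ∀ d : ℕ, 1 ≤ d →
      K * ∑ j ∈ Finset.range d, γ j ≤ A + 2 * t * Real.log d := by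
    intro d hd
    have hP : (0:ℝ) < ∏ j ∈ Finset.range d, (1 + 2 * ζ * γ j) :=
      Finset.prod_pos fun j _ => hpos j
    have h1 : K * ∑ j ∈ Finset.range d, γ j ≤
        Real.log (∏ j ∈ Finset.range d, (1 + 2 * ζ * γ j)) := by
      rw [Real.log_prod (fun j _ => (hpos j).ne'), Finset.mul_sum]
      exact Finset.sum_le_sum fun j _ => by
        have := hpt j; linarith [hpt j]
    have h2 : (∏ j ∈ Finset.range d, (1 + 2 * ζ * γ j)) ≤
        C * Real.exp (2 * t * (1 + Real.log d)) / (1 - Real.exp (-2)) := by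
      rw [le_div_iff₀ hE]
      have := h d hd
      linarith [h d hd]
    have h3 := Real.log_le_log hP h2
    rw [Real.log_div (by positivity) hE.ne',
      Real.log_mul hC.ne' (Real.exp_ne_zero _), Real.log_exp] at h3
    calc K * ∑ j ∈ Finset.range d, γ j ≤ _ := h1
      _ ≤ _ := h3
      _ = A + 2 * t * Real.log d := by rw [hAdef]; ring
  -- the constant B
  set B := (max A 0 / Real.log 2 + 2 * t) / K with hBdef
  have hlog2 : (0:ℝ) < Real.log 2 := Real.log_pos (by norm_num)
  have hB0 : 0 ≤ B := by
    apply div_nonneg _ hK.le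
    have : 0 ≤ max A 0 / Real.log 2 := div_nonneg (le_max_right _ _) hlog2.le
    linarith
  have hsumbd : ∀ d : ℕ, (∑ j ∈ Finset.range d, γ j) ≤ B * Real.log ((d : ℝ) + 1) := by
    intro d
    rcases Nat.eq_zero_or_pos d with rfl | hd
    · simp
    · have hkey := key d hd
      have hd1 : (1:ℝ) ≤ (d:ℝ) := by exact_mod_cast hd
      have hl2 : Real.log 2 ≤ Real.log ((d:ℝ) + 1) :=
        Real.log_le_log (by norm_num) (by linarith)
      have hld : Real.log (d:ℝ) ≤ Real.log ((d:ℝ) + 1) :=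
        Real.log_le_log (by linarith) (by linarith)
      have hlpos : 0 < Real.log ((d:ℝ) + 1) := lt_of_lt_of_le hlog2 hl2
      have hA' : A ≤ (max A 0 / Real.log 2) * Real.log ((d:ℝ) + 1) := by
        calc A ≤ max A 0 := le_max_left _ _
          _ = (max A 0 / Real.log 2) * Real.log 2 := by
              field_simp
          _ ≤ (max A 0 / Real.log 2) * Real.log ((d:ℝ) + 1) := by
              apply mul_le_mul_of_nonneg_left hl2
              exact div_nonneg (le_max_right _ _) hlog2.le
      have hld0 : 0 ≤ Real.log (d:ℝ) := Real.log_nonneg hd1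
      have h4 : K * ∑ j ∈ Finset.range d, γ j ≤
          (max A 0 / Real.log 2 + 2 * t) * Real.log ((d:ℝ) + 1) := by
        have h2t : 2 * t * Real.log (d:ℝ) ≤ 2 * t * Real.log ((d:ℝ) + 1) := by
          apply mul_le_mul_of_nonneg_left hld; linarith
        calc K * ∑ j ∈ Finset.range d, γ j ≤ A + 2 * t * Real.log d := hkey
          _ ≤ (max A 0 / Real.log 2) * Real.log ((d:ℝ) + 1)
              + 2 * t * Real.log ((d:ℝ) + 1) := by linarith
          _ = _ := by ring
      rw [hBdef]
      rw [div_mul_eq_mul_div, le_div_iff₀ hK]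
      calc (∑ j ∈ Finset.range d, γ j) * K = K * ∑ j ∈ Finset.range d, γ j := by ring
        _ ≤ (max A 0 / Real.log 2 + 2 * t) * Real.log ((d:ℝ) + 1) := h4
  refine ⟨?_, ⟨B, hsumbd⟩⟩
  -- tendsto part by squeeze
  have hbound : ∀ j : ℕ, γ j ≤ B * Real.log ((j:ℝ) + 2) / ((j:ℝ) + 1) := by
    intro j
    have hcard : ((j + 1 : ℕ) : ℝ) * γ j ≤ ∑ k ∈ Finset.range (j + 1), γ k := by
      have h5 : ∀ k ∈ Finset.range (j + 1), γ j ≤ γ k := fun k hk =>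
        hmono (Nat.lt_succ_iff.mp (Finset.mem_range.mp hk))
      have := Finset.card_nsmul_le_sum (Finset.range (j + 1)) γ (γ j) h5
      simpa [nsmul_eq_mul] using this
    have h6 := hsumbd (j + 1)
    have hj1 : (0:ℝ) < (j:ℝ) + 1 := by positivity
    rw [le_div_iff₀ hj1]
    push_cast at hcard h6 ⊢
    have he : ((j:ℝ) + 1 + 1) = (j:ℝ) + 2 := by ring
    rw [he] at h6
    nlinarith [hcard, h6]
  have htend : Tendsto (fun j : ℕ => 2 * B * (Real.log ((j:ℝ) + 1) / ((j:ℝ) + 1)))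
      atTop (nhds 0) := by
    have h0 : Tendsto (fun x : ℝ => Real.log x / x) atTop (nhds 0) := by
      have := Real.isLittleO_log_id_atTop.tendsto_div_nhds_zero
      simpa using this
    have h1 : Tendsto (fun j : ℕ => ((j:ℝ) + 1)) atTop atTop :=
      tendsto_atTop_add_const_right _ _ tendsto_natCast_atTop_atTop
    have h2 := (h0.comp h1).const_mul (2 * B)
    simpa using h2
  have hsq : Tendsto γ atTop (nhds 0) := by
    apply squeeze_zero' (Eventually.of_forall fun j => (hγ j).1.le) _ htend
    filter_upwards [eventually_ge_atTop 1] with j hj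
    have hj1 : (1:ℝ) ≤ (j:ℝ) := by exact_mod_cast hj
    have hlog : Real.log ((j:ℝ) + 2) ≤ 2 * Real.log ((j:ℝ) + 1) := by
      have hsq2 : (j:ℝ) + 2 ≤ ((j:ℝ) + 1) ^ 2 := by nlinarith
      calc Real.log ((j:ℝ) + 2) ≤ Real.log (((j:ℝ) + 1) ^ 2) :=
            Real.log_le_log (by linarith) hsq2
        _ = 2 * Real.log ((j:ℝ) + 1) := by
            rw [Real.log_pow]; push_cast; ring
    have hj1' : (0:ℝ) < (j:ℝ) + 1 := by linarith
    calc γ j ≤ B * Real.log ((j:ℝ) + 2) / ((j:ℝ) + 1) := hbound j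
      _ ≤ 2 * B * (Real.log ((j:ℝ) + 1) / ((j:ℝ) + 1)) := by
          rw [div_le_iff₀ hj1', mul_assoc, div_mul_cancel₀ _ hj1'.ne']
          nlinarith [hlog, hB0]
  exact hsq
end

section
/- Suppose for positive constants σ, τ, c, and functions satisfying n(ε,d) ≥ (1−ε²) ∏_{j=1}^d (1+c·γ_j) for all d ∈ ℕ and ε ∈ (0,1), where γ_j ∈ (0,1], that lim_{d+1/ε→∞} ln n(ε,d)/(d^σ + ε^{-τ}) = 0. Then lim_{d→∞} d^{-σ} Σ_{j=1}^d γ_j = 0. -/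
open Filter

/-- If the information complexity satisfies `n(ε,d) ≥ (1-ε²) ∏_{j=1}^d (1+c γ_j)` and the
problem is `(σ,τ)`-weakly tractable (`ln n(ε,d)/(d^σ+ε^{-τ}) → 0` as `d+1/ε → ∞`), then
`d^{-σ} Σ_{j=1}^d γ_j → 0`. -/
theorem stmt15 (σ τ c : ℝ) (hσ : 0 < σ) (hτ : 0 < τ) (hc : 0 < c)
    (γ : ℕ → ℝ) (hγ : ∀ j, γ j ∈ Set.Ioc (0 : ℝ) 1) (n : ℝ → ℕ → ℕ)
    (hlow : ∀ ε ∈ Set.Ioo (0 : ℝ) 1, ∀ d : ℕ,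
      (1 - ε ^ 2) * ∏ j ∈ Finset.range d, (1 + c * γ j) ≤ (n ε d : ℝ))
    (hwt : ∀ δ : ℝ, 0 < δ → ∃ M : ℝ, ∀ ε ∈ Set.Ioo (0 : ℝ) 1, ∀ d : ℕ,
      M ≤ (d : ℝ) + 1 / ε →
        Real.log (n ε d) < δ * ((d : ℝ) ^ σ + ε ^ (-τ))) :
    Tendsto (fun d : ℕ => (∑ j ∈ Finset.range d, γ j) / (d : ℝ) ^ σ) atTop (nhds 0) := by
  have hL : 0 < Real.log (1 + c) := Real.log_pos (by linarith)
  set L := Real.log (1 + c) with hLdef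
  set K : ℝ := (1/2 : ℝ) ^ (-τ) with hKdef
  have hK : 0 < K := Real.rpow_pos_of_pos (by norm_num) _
  have hhalf : (1/2 : ℝ) ∈ Set.Ioo (0 : ℝ) 1 := by norm_num
  -- key pointwise bound on sums
  have key : ∀ δ : ℝ, 0 < δ → ∃ M : ℝ, ∀ d : ℕ, M ≤ (d : ℝ) + 2 →
      (∑ j ∈ Finset.range d, γ j) * L ≤ δ * ((d : ℝ) ^ σ + K) + Real.log (4/3) := by
    intro δ hδ
    obtain ⟨M, hM⟩ := hwt δ hδ
    refine ⟨M, fun d hd => ?_⟩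
    have hpos : ∀ j ∈ Finset.range d, (0 : ℝ) < 1 + c * γ j := by
      intro j _; have := (hγ j).1; nlinarith
    have hP : (0 : ℝ) < ∏ j ∈ Finset.range d, (1 + c * γ j) :=
      Finset.prod_pos hpos
    have hlow' := hlow (1/2) hhalf d
    have h34 : (1 - (1/2 : ℝ) ^ 2) = 3/4 := by norm_num
    have hn : (3/4 : ℝ) * ∏ j ∈ Finset.range d, (1 + c * γ j) ≤ (n (1/2) d : ℝ) := by
      rw [← h34]; exact hlow'
    have hnpos : (0 : ℝ) < (n (1/2) d : ℝ) := lt_of_lt_of_le (by positivity) hn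
    have hlogn : Real.log (3/4) + Real.log (∏ j ∈ Finset.range d, (1 + c * γ j))
        ≤ Real.log (n (1/2) d) := by
      rw [← Real.log_mul (by norm_num) (ne_of_gt hP)]
      exact Real.log_le_log (by positivity) hn
    have hsum : (∑ j ∈ Finset.range d, γ j) * L ≤
        Real.log (∏ j ∈ Finset.range d, (1 + c * γ j)) := by
      rw [Real.log_prod (fun j hj => ne_of_gt (hpos j hj)), Finset.sum_mul]
      refine Finset.sum_le_sum fun j _ => ?_
      have h1 := (hγ j).1
      have h2 := (hγ j).2
      have hbern : (1 + c) ^ (γ j) ≤ 1 + γ j * c :=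
        rpow_one_add_le_one_add_mul_self (by linarith) h1.le h2
      calc γ j * L = Real.log ((1 + c) ^ (γ j)) := by
            rw [Real.log_rpow (by linarith)]
        _ ≤ Real.log (1 + c * γ j) := by
            apply Real.log_le_log (by positivity)
            linarith [hbern]
    have hwtd := hM (1/2) hhalf d (by
      have h2 : (1:ℝ) / (1/2) = 2 := by norm_num
      rw [h2]; exact hd)
    have hK' : ((1:ℝ)/2) ^ (-τ) = K := rfl
    have hlog43 : Real.log (3/4) = - Real.log (4/3) := by
      rw [← Real.log_inv]; norm_num
    nlinarith [hwtd, hlogn, hsum]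
  -- now the epsilon argument
  rw [Metric.tendsto_atTop]
  intro η hη
  obtain ⟨M, hM⟩ := key (η * L / 4) (by positivity)
  -- choose N large
  have htop : Tendsto (fun d : ℕ => (d : ℝ) ^ σ) atTop atTop :=
    (tendsto_rpow_atTop hσ).comp tendsto_natCast_atTop_atTop
  have hev : ∀ᶠ d : ℕ in atTop,
      max (2 * (η * L / 4 * K + Real.log (4/3)) / (L * (η/2))) 1 ≤ (d : ℝ) ^ σ :=
    htop.eventually_ge_atTop _
  have hev2 : ∀ᶠ d : ℕ in atTop, M ≤ (d : ℝ) + 2 := by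
    have : Tendsto (fun d : ℕ => (d : ℝ) + 2) atTop atTop :=
      tendsto_atTop_add_const_right _ _ tendsto_natCast_atTop_atTop
    exact this.eventually_ge_atTop M
  obtain ⟨N, hN⟩ := ((hev.and hev2).and (eventually_ge_atTop 1)).exists_forall_of_atTop
  refine ⟨N, fun d hd => ?_⟩
  obtain ⟨⟨hd1, hd2⟩, hd3⟩ := hN d hd
  have hdσ : (1 : ℝ) ≤ (d : ℝ) ^ σ := le_trans (le_max_right _ _) hd1
  have hdσpos : (0 : ℝ) < (d : ℝ) ^ σ := by linarith
  have hS : (0 : ℝ) ≤ ∑ j ∈ Finset.range d, γ j :=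
    Finset.sum_nonneg fun j _ => (hγ j).1.le
  have hkey := hM d hd2
  rw [Real.dist_eq, sub_zero, abs_of_nonneg (by positivity)]
  rw [div_lt_iff₀ hdσpos]
  -- S * L ≤ η*L/4 * (d^σ + K) + log(4/3); want S < η * d^σ
  have hC : 2 * (η * L / 4 * K + Real.log (4/3)) / (L * (η/2)) ≤ (d : ℝ) ^ σ :=
    le_trans (le_max_left _ _) hd1
  have hCpos : 0 < L * (η/2) := by positivity
  have hC' : 2 * (η * L / 4 * K + Real.log (4/3)) ≤ (d : ℝ) ^ σ * (L * (η/2)) := by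
    rw [div_le_iff₀ hCpos] at hC; linarith
  -- multiply goal by L
  have goal' : (∑ j ∈ Finset.range d, γ j) * L < η * (d : ℝ) ^ σ * L := by
    have hlog43' : (0:ℝ) < Real.log (4/3) := Real.log_pos (by norm_num)
    nlinarith [hkey, hC']
  exact lt_of_mul_lt_mul_right goal' hL.le
end

section
/- Let σ ∈ (0,1], α > 1, λ ∈ (1/2, α/2), and (γ_j) ⊂ (0,1] with lim_{d→∞} d^{-σ} Σ_{j=1}^d γ_j^{1/(2λ)} = 0. Define n(ε,d) as any function satisfying n(ε,d) ≤ 4·( (√2/ε) ∏_{j=1}^d (1 + 2^{2α+1} γ_j^{1/(2λ)} ζ(α/(2λ)))^{2λ} )^{(4λ−1)/(λ(2λ−1))}. Then for all τ > 0, lim_{d+1/ε→∞} ln n(ε,d)/(d^σ + ε^{-τ}) = 0. -/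
open Filter

set_option maxHeartbeats 1000000 in
/-- If `d^{-σ} Σ_{j=1}^d γ_j^{1/(2λ)} → 0` and `n(ε,d)` satisfies the upper bound coming
from the spline algorithm of Zeng, Kritzer and Hickernell, then for every `τ > 0` the
problem is `(σ,τ)`-weakly tractable. -/
theorem stmt16 (σ α lam : ℝ) (hσ : σ ∈ Set.Ioc (0 : ℝ) 1) (hα : 1 < α)
    (hlam : lam ∈ Set.Ioo (1 / 2 : ℝ) (α / 2)) (γ : ℕ → ℝ)
    (hγ : ∀ j, γ j ∈ Set.Ioc (0 : ℝ) 1)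
    (hlim : Tendsto (fun d : ℕ =>
        (∑ j ∈ Finset.range d, γ j ^ (1 / (2 * lam))) / (d : ℝ) ^ σ) atTop (nhds 0))
    (n : ℝ → ℕ → ℕ)
    (hup : ∀ ε ∈ Set.Ioo (0 : ℝ) 1, ∀ d : ℕ,
      (n ε d : ℝ) ≤ 4 * ((Real.sqrt 2 / ε) *
          ∏ j ∈ Finset.range d,
            (1 + 2 ^ (2 * α + 1) * γ j ^ (1 / (2 * lam)) * zetaR (α / (2 * lam)))
              ^ (2 * lam)) ^ ((4 * lam - 1) / (lam * (2 * lam - 1)))) :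
    ∀ τ : ℝ, 0 < τ → ∀ δ : ℝ, 0 < δ → ∃ M : ℝ, ∀ ε ∈ Set.Ioo (0 : ℝ) 1, ∀ d : ℕ,
      M ≤ (d : ℝ) + 1 / ε →
        Real.log (n ε d) < δ * ((d : ℝ) ^ σ + ε ^ (-τ)) := by
  intro τ hτ δ hδ
  have hσ0 : 0 < σ := hσ.1
  have hl : 1 / 2 < lam := hlam.1
  have hlam0 : 0 < lam := by linarith
  have h2l : 0 < 2 * lam - 1 := by linarith
  set C : ℝ := (4 * lam - 1) / (lam * (2 * lam - 1)) with hCdef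
  have hC0 : 0 < C := div_pos (by linarith) (by positivity)
  have hζ0 : 0 ≤ zetaR (α / (2 * lam)) := tsum_nonneg (fun m => by positivity)
  set c : ℝ := 2 ^ (2 * α + 1) * zetaR (α / (2 * lam)) with hcdef
  have hc0 : 0 ≤ c := mul_nonneg (Real.rpow_nonneg (by norm_num) _) hζ0
  set g : ℕ → ℝ := fun j => γ j ^ (1 / (2 * lam)) with hgdef
  have hg0 : ∀ j, 0 < g j := fun j => Real.rpow_pos_of_pos (hγ j).1 _
  set T : ℕ → ℝ := fun d => ∑ j ∈ Finset.range d, g j with hTdef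
  have hT0 : ∀ d, 0 ≤ T d := fun d => Finset.sum_nonneg (fun j _ => (hg0 j).le)
  have hTmono : Monotone T := fun a b hab =>
    Finset.sum_le_sum_of_subset_of_nonneg (Finset.range_subset_range.2 hab)
      (fun j _ _ => (hg0 j).le)
  set K : ℝ := C * (2 * lam) * c with hKdef
  have hK0 : 0 ≤ K := mul_nonneg (mul_nonneg hC0.le (by linarith)) hc0
  -- Step 1 : log bound
  have key : ∀ ε ∈ Set.Ioo (0 : ℝ) 1, ∀ d : ℕ, Real.log (n ε d) ≤
      Real.log 4 + C * Real.log (Real.sqrt 2) + C * (-Real.log ε) + K * T d := by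
    intro ε hε d
    have hε0 : 0 < ε := hε.1
    set P : ℝ := ∏ j ∈ Finset.range d,
        (1 + 2 ^ (2 * α + 1) * γ j ^ (1 / (2 * lam)) * zetaR (α / (2 * lam)))
          ^ (2 * lam) with hPdef
    have hfac : ∀ j, (1 : ℝ) ≤
        (1 + 2 ^ (2 * α + 1) * γ j ^ (1 / (2 * lam)) * zetaR (α / (2 * lam)))
          ^ (2 * lam) := by
      intro j
      have h1 : (1 : ℝ) ≤ 1 + 2 ^ (2 * α + 1) * γ j ^ (1 / (2 * lam)) * zetaR (α / (2 * lam)) := by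
        have : (0:ℝ) ≤ 2 ^ (2 * α + 1) * γ j ^ (1 / (2 * lam)) * zetaR (α / (2 * lam)) :=
          mul_nonneg (mul_nonneg (Real.rpow_nonneg (by norm_num) _)
            (Real.rpow_nonneg (hγ j).1.le _)) hζ0
        linarith
      exact Real.one_le_rpow h1 (by linarith)
    have hP1 : (1 : ℝ) ≤ P := by
      rw [hPdef]
      calc (1:ℝ) = ∏ _j ∈ Finset.range d, (1:ℝ) := Finset.prod_const_one.symm
        _ ≤ _ := Finset.prod_le_prod (fun j _ => zero_le_one) (fun j _ => hfac j)
    have hP0 : 0 < P := lt_of_lt_of_le one_pos hP1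
    have hX0 : 0 < Real.sqrt 2 / ε * P :=
      mul_pos (div_pos (Real.sqrt_pos.2 (by norm_num)) hε0) hP0
    -- log (n ε d) ≤ log bound
    have hlogn : Real.log (n ε d) ≤
        Real.log (4 * (Real.sqrt 2 / ε * P) ^ C) := by
      rcases Nat.eq_zero_or_pos (n ε d) with h0 | h1
      · rw [h0]
        simp only [Nat.cast_zero, Real.log_zero]
        apply Real.log_nonneg
        have : (1:ℝ) ≤ (Real.sqrt 2 / ε * P) ^ C := by
          apply Real.one_le_rpow _ hC0.le
          have h2 : (1:ℝ) ≤ Real.sqrt 2 / ε := by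
            rw [le_div_iff₀ hε0]
            have := Real.one_le_sqrt.mpr (by norm_num : (1:ℝ) ≤ 2)
            nlinarith [hε.2]
          nlinarith
        nlinarith
      · exact Real.log_le_log (by exact_mod_cast h1) (hup ε hε d)
    refine hlogn.trans ?_
    rw [Real.log_mul (by norm_num) (ne_of_gt (Real.rpow_pos_of_pos hX0 C)),
      Real.log_rpow hX0,
      Real.log_mul (ne_of_gt (div_pos (Real.sqrt_pos.2 (by norm_num)) hε0)) hP0.ne',
      Real.log_div (ne_of_gt (Real.sqrt_pos.2 (by norm_num))) hε0.ne']
    have hlogP : Real.log P ≤ 2 * lam * (c * T d) := by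
      rw [hPdef, Real.log_prod (fun j _ => (lt_of_lt_of_le one_pos (hfac j)).ne')]
      have hterm : ∀ j, Real.log
          ((1 + 2 ^ (2 * α + 1) * γ j ^ (1 / (2 * lam)) * zetaR (α / (2 * lam)))
            ^ (2 * lam)) ≤ 2 * lam * (c * g j) := by
        intro j
        have hb0 : (0:ℝ) < 1 + 2 ^ (2 * α + 1) * γ j ^ (1 / (2 * lam)) * zetaR (α / (2 * lam)) :=
          lt_of_lt_of_le one_pos (by
            have : (0:ℝ) ≤ 2 ^ (2 * α + 1) * γ j ^ (1 / (2 * lam)) * zetaR (α / (2 * lam)) :=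
              mul_nonneg (mul_nonneg (Real.rpow_nonneg (by norm_num) _)
                (Real.rpow_nonneg (hγ j).1.le _)) hζ0
            linarith)
        rw [Real.log_rpow hb0]
        have hle : Real.log
            (1 + 2 ^ (2 * α + 1) * γ j ^ (1 / (2 * lam)) * zetaR (α / (2 * lam))) ≤
            c * g j := by
          have := Real.log_le_sub_one_of_pos hb0
          have heq : 2 ^ (2 * α + 1) * γ j ^ (1 / (2 * lam)) * zetaR (α / (2 * lam)) =
              c * g j := by rw [hcdef, hgdef]; ring
          linarith [heq ▸ this]
        nlinarith [hle]
      calc ∑ j ∈ Finset.range d, Real.log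
            ((1 + 2 ^ (2 * α + 1) * γ j ^ (1 / (2 * lam)) * zetaR (α / (2 * lam)))
              ^ (2 * lam))
          ≤ ∑ j ∈ Finset.range d, 2 * lam * (c * g j) :=
            Finset.sum_le_sum (fun j _ => hterm j)
        _ = 2 * lam * (c * T d) := by rw [hTdef, Finset.mul_sum, Finset.mul_sum]
    have : C * (Real.log (Real.sqrt 2) - Real.log ε + Real.log P) ≤
        C * Real.log (Real.sqrt 2) + C * (-Real.log ε) + K * T d := by
      have h1 : C * Real.log P ≤ K * T d := by
        rw [hKdef]
        calc C * Real.log P ≤ C * (2 * lam * (c * T d)) :=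
          mul_le_mul_of_nonneg_left hlogP hC0.le
        _ = C * (2 * lam) * c * T d := by ring
      nlinarith [h1]
    linarith
  -- Step 2 : handle the ε part
  obtain ⟨A1, hA10, hA1⟩ : ∃ A1, 0 ≤ A1 ∧ ∀ ε ∈ Set.Ioo (0:ℝ) 1,
      C * (-Real.log ε) ≤ A1 + δ / 4 * ε ^ (-τ) := by
    have hlo := (isLittleO_log_rpow_atTop hτ).def
      (show (0:ℝ) < δ / (4 * C) from by positivity)
    rw [eventually_atTop] at hlo
    obtain ⟨x₀, hx₀⟩ := hlo
    set x₁ : ℝ := max x₀ 1 with hx₁def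
    refine ⟨C * Real.log x₁, mul_nonneg hC0.le (Real.log_nonneg (le_max_right _ _)), ?_⟩
    intro ε hε
    have hε0 : 0 < ε := hε.1
    have hx : (1:ℝ) < ε⁻¹ := (one_lt_inv₀ hε0).2 hε.2
    have hεinv : ε ^ (-τ) = (ε⁻¹) ^ τ := by
      rw [Real.rpow_neg hε0.le, Real.inv_rpow hε0.le]
    have hlog : -Real.log ε = Real.log ε⁻¹ := (Real.log_inv ε).symm
    rw [hlog, hεinv]
    rcases le_or_gt x₁ ε⁻¹ with h | h
    · have := hx₀ ε⁻¹ (le_trans (le_max_left _ _) h)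
      rw [Real.norm_eq_abs, Real.norm_eq_abs,
        abs_of_nonneg (Real.log_nonneg hx.le),
        abs_of_nonneg (Real.rpow_nonneg (by positivity) _)] at this
      have h2 : C * Real.log ε⁻¹ ≤ C * (δ / (4 * C) * ε⁻¹ ^ τ) :=
        mul_le_mul_of_nonneg_left this hC0.le
      have h3 : C * (δ / (4 * C) * ε⁻¹ ^ τ) = δ / 4 * ε⁻¹ ^ τ := by
        field_simp
      have h4 : 0 ≤ C * Real.log x₁ :=
        mul_nonneg hC0.le (Real.log_nonneg (le_max_right _ _))
      linarith [h2, h3 ▸ h2]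
    · have h2 : Real.log ε⁻¹ ≤ Real.log x₁ := Real.log_le_log (by positivity) h.le
      have h3 : (0:ℝ) ≤ δ / 4 * ε⁻¹ ^ τ := by positivity
      nlinarith [mul_le_mul_of_nonneg_left h2 hC0.le]
  -- Step 3 : handle the d part
  obtain ⟨A2, hA20, hA2⟩ : ∃ A2, 0 ≤ A2 ∧ ∀ d : ℕ,
      K * T d ≤ A2 + δ / 4 * (d : ℝ) ^ σ := by
    have hη : (0:ℝ) < δ / 4 / (K + 1) := by positivity
    have hev : ∀ᶠ d : ℕ in atTop, T d / (d : ℝ) ^ σ < δ / 4 / (K + 1) :=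
      hlim.eventually (tendsto_id.eventually_lt_const hη)
    rw [eventually_atTop] at hev
    obtain ⟨d₀, hd₀⟩ := hev
    set d₁ : ℕ := max d₀ 1 with hd₁def
    refine ⟨K * T d₁, mul_nonneg hK0 (hT0 _), ?_⟩
    intro d
    rcases le_or_gt d₁ d with h | h
    · have hd1 : (1:ℕ) ≤ d := le_trans (le_max_right _ _) h
      have hdpos : (0:ℝ) < (d : ℝ) ^ σ :=
        Real.rpow_pos_of_pos (by exact_mod_cast hd1) _
      have hratio : T d / (d : ℝ) ^ σ < δ / 4 / (K + 1) :=
        hd₀ d (le_trans (le_max_left _ _) h)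
      have hTd : T d ≤ δ / 4 / (K + 1) * (d : ℝ) ^ σ := by
        rw [div_lt_iff₀ hdpos] at hratio
        linarith
      have h1 : K * T d ≤ K * (δ / 4 / (K + 1) * (d : ℝ) ^ σ) :=
        mul_le_mul_of_nonneg_left hTd hK0
      have h2 : K * (δ / 4 / (K + 1)) ≤ δ / 4 := by
        rw [mul_div_assoc', div_le_iff₀ (by linarith : (0:ℝ) < K + 1)]
        nlinarith
      have h3 : K * (δ / 4 / (K + 1) * (d : ℝ) ^ σ) ≤ δ / 4 * (d : ℝ) ^ σ := by
        have := mul_le_mul_of_nonneg_right h2 hdpos.le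
        nlinarith
      have h4 : 0 ≤ K * T d₁ := mul_nonneg hK0 (hT0 _)
      linarith
    · have h1 : K * T d ≤ K * T d₁ :=
        mul_le_mul_of_nonneg_left (hTmono h.le) hK0
      have h2 : 0 ≤ δ / 4 * (d : ℝ) ^ σ := by positivity
      linarith
  -- Step 4 : choose M
  set A : ℝ := Real.log 4 + C * Real.log (Real.sqrt 2) + A1 + A2 with hAdef
  set s : ℝ := min σ τ with hsdef
  have hs0 : 0 < s := lt_min hσ0 hτ
  set B : ℝ := max 1 (4 * A / (3 * δ) + 1) with hBdef
  have hB1 : (1:ℝ) ≤ B := le_max_left _ _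
  have hAB : A < 3 * δ / 4 * B := by
    have h1 : 4 * A / (3 * δ) + 1 ≤ B := le_max_right _ _
    have h2 : 4 * A / (3 * δ) < B := by linarith
    rw [div_lt_iff₀ (by positivity : (0:ℝ) < 3 * δ)] at h2
    nlinarith
  refine ⟨2 * B ^ (1 / s), ?_⟩
  intro ε hε d hM
  have hε0 : 0 < ε := hε.1
  have hBs1 : (1:ℝ) ≤ B ^ (1 / s) := Real.one_le_rpow hB1 (by positivity)
  have hBs0 : (0:ℝ) < B ^ (1 / s) := lt_of_lt_of_le one_pos hBs1
  have hεinv : ε ^ (-τ) = (ε⁻¹) ^ τ := by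
    rw [Real.rpow_neg hε0.le, Real.inv_rpow hε0.le]
  have hεinv0 : (0:ℝ) < ε⁻¹ := by positivity
  have hXB : B ≤ (d : ℝ) ^ σ + ε ^ (-τ) := by
    have hcase : B ^ (1 / s) ≤ (d : ℝ) ∨ B ^ (1 / s) ≤ ε⁻¹ := by
      by_contra hcon
      push_neg at hcon
      have h1 : (d : ℝ) + 1 / ε < 2 * B ^ (1 / s) := by
        rw [one_div]
        linarith [hcon.1, hcon.2]
      linarith [hM]
    have hpow : (B ^ (1 / s)) ^ s = B := by
      rw [← Real.rpow_mul (le_trans zero_le_one hB1), one_div,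
        inv_mul_cancel₀ hs0.ne', Real.rpow_one]
    rcases hcase with h | h
    · have h1 : B ≤ (d : ℝ) ^ σ := by
        calc B = (B ^ (1 / s)) ^ s := hpow.symm
          _ ≤ (B ^ (1 / s)) ^ σ :=
            Real.rpow_le_rpow_of_exponent_le hBs1 (min_le_left _ _)
          _ ≤ (d : ℝ) ^ σ := Real.rpow_le_rpow hBs0.le h hσ0.le
      have h2 : 0 ≤ ε ^ (-τ) := Real.rpow_nonneg hε0.le _
      linarith
    · have h1 : B ≤ ε ^ (-τ) := by
        rw [hεinv]
        calc B = (B ^ (1 / s)) ^ s := hpow.symm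
          _ ≤ (B ^ (1 / s)) ^ τ :=
            Real.rpow_le_rpow_of_exponent_le hBs1 (min_le_right _ _)
          _ ≤ (ε⁻¹) ^ τ := Real.rpow_le_rpow hBs0.le h hτ.le
      have h2 : 0 ≤ (d : ℝ) ^ σ := Real.rpow_nonneg (Nat.cast_nonneg d) _
      linarith
  have hX0 : 0 < (d : ℝ) ^ σ + ε ^ (-τ) := lt_of_lt_of_le (lt_of_lt_of_le one_pos hB1) hXB
  have hbound := key ε hε d
  have hε2 := hA1 ε hε
  have hd2 := hA2 d
  have hfinal : Real.log (n ε d) ≤ A + δ / 4 * ((d : ℝ) ^ σ + ε ^ (-τ)) := by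
    rw [hAdef]
    have : δ / 4 * ((d : ℝ) ^ σ + ε ^ (-τ)) =
        δ / 4 * ε ^ (-τ) + δ / 4 * (d : ℝ) ^ σ := by ring
    rw [this]
    linarith
  have hA3 : A < 3 * δ / 4 * ((d : ℝ) ^ σ + ε ^ (-τ)) :=
    lt_of_lt_of_le hAB (mul_le_mul_of_nonneg_left hXB (by positivity))
  calc Real.log (n ε d) ≤ A + δ / 4 * ((d : ℝ) ^ σ + ε ^ (-τ)) := hfinal
    _ < 3 * δ / 4 * ((d : ℝ) ^ σ + ε ^ (-τ)) + δ / 4 * ((d : ℝ) ^ σ + ε ^ (-τ)) := by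
        linarith
    _ = δ * ((d : ℝ) ^ σ + ε ^ (-τ)) := by ring
end
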